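/- Consider the microgrid model: with n = nG + nE + nN, let R₀ = blockdiag(R_G + R_D, R_E, G), F = J − R₀ with J skew-symmetric, g the n×nG block matrix [I; 0; 0], E ∈ ℝⁿ, and for z ∈ ℝⁿ with last block q having all entries nonzero let d(z) ∈ ℝⁿ be the vector whose first nG + nE entries are zero and whose k-th last-block entry is −P_k C_k / q_k. Let u : ℝ → ℝ^{nG} and let x : ℝ → ℝⁿ be differentiable with x'(t) = F·Q·x(t) + d(x(t)) + g·u(t) + E for all t, and let x̄ ∈ ℝⁿ and ū ∈ ℝ^{nG} satisfy 0 = F·Q·x̄ + d(x̄) + g·ū + E. Assume the last-block entries q_k(t) of x(t) and q̄_k of x̄ are nonzero for all k and t. Then x̃ = x − x̄ satisfies x̃'(t) = (J − R̃(x̃(t)))·Q·x̃(t) + g·(u(t) − ū) for all t, where R̃(z̃) = blockdiag(R_G + R_D, R_E, G − G_P(q̃)) and G_P(q̃) is the diagonal matrix with k-th entry P_k C_k² / (q̄_k (q̃_k + q̄_k)). -/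

import Mathlib

open Matrix

/-- Index type of the microgrid state: generator currents, line currents, bus charges. -/
abbrev BIdx (nG nE nN : ℕ) := Fin nG ⊕ (Fin nE ⊕ Fin nN)

/-- The input matrix `g = [I; 0; 0]`. -/
noncomputable def gMat (nG nE nN : ℕ) : Matrix (BIdx nG nE nN) (Fin nG) ℝ :=
  Matrix.of fun i j =>
    match i with
    | Sum.inl i' => if i' = j then (1 : ℝ) else 0
    | Sum.inr _ => 0

/-- Block-diagonal matrix with three diagonal blocks. -/
noncomputable def bd3 {nG nE nN : ℕ} (A : Matrix (Fin nG) (Fin nG) ℝ)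
    (B : Matrix (Fin nE) (Fin nE) ℝ) (D : Matrix (Fin nN) (Fin nN) ℝ) :
    Matrix (BIdx nG nE nN) (BIdx nG nE nN) ℝ :=
  Matrix.fromBlocks A 0 0 (Matrix.fromBlocks B 0 0 D)

/-- `G_P(q̃) = diag (P_k C_k² / (q̄_k (q̃_k + q̄_k)))`. -/
noncomputable def GPm {nN : ℕ} (P cD qbar : Fin nN → ℝ) (qt : Fin nN → ℝ) :
    Matrix (Fin nN) (Fin nN) ℝ :=
  Matrix.diagonal fun k => P k * (cD k) ^ 2 / (qbar k * (qt k + qbar k))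

/-- The state-dependent dissipation matrix
`R̃(z̃) = blockdiag(R_G + R_D, R_E, G − G_P(q̃))` of the incremental microgrid model. -/
noncomputable def Rtil {nG nE nN : ℕ} (rG rD : Fin nG → ℝ) (rE : Fin nE → ℝ)
    (gD cD P qbar : Fin nN → ℝ) (z : BIdx nG nE nN → ℝ) :
    Matrix (BIdx nG nE nN) (BIdx nG nE nN) ℝ :=
  bd3 (Matrix.diagonal fun i => rG i + rD i) (Matrix.diagonal rE)
    (Matrix.diagonal gD - GPm P cD qbar fun k => z (Sum.inr (Sum.inr k)))


/-- The constant-power-load drift: zero on the first two blocks, `−P_k C_k / q_k` on the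
charge block. -/
noncomputable def cplDrift {nG nE nN : ℕ} (P cD : Fin nN → ℝ) (z : BIdx nG nE nN → ℝ) :
    BIdx nG nE nN → ℝ :=
  fun i =>
    match i with
    | Sum.inl _ => 0
    | Sum.inr (Sum.inl _) => 0
    | Sum.inr (Sum.inr k) => -(P k * cD k / z (Sum.inr (Sum.inr k)))

/-- The incremental model of the droop-based microgrid with ZIP loads
admits the port-Hamiltonian representation `x̃' = (J − R̃(x̃))Qx̃ + g(u − ū)` with
state-dependent dissipation matrix `R̃`. -/
theorem incremental_model_pH
    (nG nE nN : ℕ) (hnG : 0 < nG) (hnE : 0 < nE) (hnN : 0 < nN)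
    (rG rD : Fin nG → ℝ) (rE : Fin nE → ℝ) (gD cD : Fin nN → ℝ) (lG : Fin nG → ℝ)
    (lE : Fin nE → ℝ)
    (hrG : ∀ i, 0 < rG i) (hrD : ∀ i, 0 < rD i) (hrE : ∀ j, 0 < rE j)
    (hcD : ∀ k, 0 < cD k) (hgD : ∀ k, 0 ≤ gD k)
    (hlG : ∀ i, 0 < lG i) (hlE : ∀ j, 0 < lE j)
    (J : Matrix (BIdx nG nE nN) (BIdx nG nE nN) ℝ) (hJ : Jᵀ = -J)
    (P : Fin nN → ℝ) (E : BIdx nG nE nN → ℝ)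
    (ut : ℝ → (Fin nG → ℝ)) (xt : ℝ → (BIdx nG nE nN → ℝ))
    (xbar : BIdx nG nE nN → ℝ) (ubar : Fin nG → ℝ) :
    let Q : Matrix (BIdx nG nE nN) (BIdx nG nE nN) ℝ :=
      bd3 (Matrix.diagonal fun i => (lG i)⁻¹) (Matrix.diagonal fun j => (lE j)⁻¹)
        (Matrix.diagonal fun k => (cD k)⁻¹)
    let R0 : Matrix (BIdx nG nE nN) (BIdx nG nE nN) ℝ :=
      bd3 (Matrix.diagonal fun i => rG i + rD i) (Matrix.diagonal rE)
        (Matrix.diagonal gD)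
    let F : Matrix (BIdx nG nE nN) (BIdx nG nE nN) ℝ := J - R0
    (∀ t : ℝ, HasDerivAt xt
        (F *ᵥ (Q *ᵥ xt t) + cplDrift P cD (xt t) + gMat nG nE nN *ᵥ ut t + E) t) →
    (0 = F *ᵥ (Q *ᵥ xbar) + cplDrift P cD xbar + gMat nG nE nN *ᵥ ubar + E) →
    (∀ t : ℝ, ∀ k : Fin nN, xt t (Sum.inr (Sum.inr k)) ≠ 0) →
    (∀ k : Fin nN, xbar (Sum.inr (Sum.inr k)) ≠ 0) →
    ∀ t : ℝ, HasDerivAt (fun s => xt s - xbar)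
      ((J - Rtil rG rD rE gD cD P (fun k => xbar (Sum.inr (Sum.inr k)))
          (xt t - xbar)) *ᵥ (Q *ᵥ (xt t - xbar)) +
        gMat nG nE nN *ᵥ (ut t - ubar)) t := by
  intro Q R0 F hxt heq hq hqbar t
  have hdQ : Q = Matrix.diagonal (Sum.elim (fun i => (lG i)⁻¹)
      (Sum.elim (fun j => (lE j)⁻¹) (fun k => (cD k)⁻¹))) := by
    simp [Q, bd3, Matrix.fromBlocks_diagonal]
  have hR0 : R0 = Matrix.diagonal (Sum.elim (fun i => rG i + rD i)
      (Sum.elim rE gD)) := by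
    simp [R0, bd3, Matrix.fromBlocks_diagonal]
  have hRt : Rtil rG rD rE gD cD P (fun k => xbar (Sum.inr (Sum.inr k))) (xt t - xbar)
      = Matrix.diagonal (Sum.elim (fun i => rG i + rD i) (Sum.elim rE
        (fun k => gD k - P k * (cD k) ^ 2 / (xbar (Sum.inr (Sum.inr k)) *
          ((xt t - xbar) (Sum.inr (Sum.inr k)) + xbar (Sum.inr (Sum.inr k))))))) := by
    simp only [Rtil, GPm, bd3, Matrix.diagonal_sub, Matrix.fromBlocks_diagonal]
  have hRdiff : R0 - Rtil rG rD rE gD cD P (fun k => xbar (Sum.inr (Sum.inr k)))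
      (xt t - xbar) = Matrix.diagonal (Sum.elim (fun _ => (0:ℝ)) (Sum.elim (fun _ => 0)
        (fun k => P k * (cD k) ^ 2 / (xbar (Sum.inr (Sum.inr k)) *
          ((xt t - xbar) (Sum.inr (Sum.inr k)) + xbar (Sum.inr (Sum.inr k))))))) := by
    rw [hR0, hRt, Matrix.diagonal_sub]
    refine congrArg Matrix.diagonal (funext fun i => ?_)
    rcases i with i | i | k <;> simp
  have key : (R0 - Rtil rG rD rE gD cD P (fun k => xbar (Sum.inr (Sum.inr k)))
      (xt t - xbar)) *ᵥ (Q *ᵥ (xt t - xbar))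
      = cplDrift P cD (xt t) - cplDrift P cD xbar := by
    rw [hRdiff, hdQ]
    funext i
    rcases i with i | i | k
    · simp [Matrix.mulVec_diagonal, cplDrift]
    · simp [Matrix.mulVec_diagonal, cplDrift]
    · simp only [Matrix.mulVec_diagonal, Sum.elim_inr, Pi.sub_apply, cplDrift]
      have h1 := hq t k
      have h2 := hqbar k
      have h3 : xt t (Sum.inr (Sum.inr k)) - xbar (Sum.inr (Sum.inr k))
          + xbar (Sum.inr (Sum.inr k)) = xt t (Sum.inr (Sum.inr k)) := by ring
      rw [h3]
      have hc := (hcD k).ne'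
      field_simp
      try ring
  have hd := (hxt t).sub_const xbar
  refine hd.congr_deriv ?_
  have hE : E = -(F *ᵥ (Q *ᵥ xbar) + cplDrift P cD xbar + gMat nG nE nN *ᵥ ubar) :=
    eq_neg_of_add_eq_zero_right heq.symm
  rw [hE]
  have hsplit : J - Rtil rG rD rE gD cD P (fun k => xbar (Sum.inr (Sum.inr k)))
      (xt t - xbar) = F + (R0 - Rtil rG rD rE gD cD P
        (fun k => xbar (Sum.inr (Sum.inr k))) (xt t - xbar)) := by
    simp [F]; try abel
  rw [hsplit, Matrix.add_mulVec, key]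
  have hQsub : Q *ᵥ (xt t - xbar) = Q *ᵥ xt t - Q *ᵥ xbar := Matrix.mulVec_sub _ _ _
  rw [hQsub, Matrix.mulVec_sub, Matrix.mulVec_sub]
  abel
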